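/- Let p be an odd prime with v^t ≥ 2, g = v a primitive root mod p, and write p = q·v^(t−1) + r with 0 ≤ r < v^(t−1). Define n_l and n_u by n_l + n_u = v^t and n_l·⌊q/v⌋ + n_u·(⌊q/v⌋+1) = p−1. Then n_l > 0; that is, there always exists a tuple z ∈ Z_v^t with λ(z) = ⌊q/v⌋. Moreover n_u = 0 if and only if p ≡ 1 (mod v^t). -/

import Mathlib

open Finset

private lemma count_aux (p v t : ℕ) (hp : p.Prime) (hv2 : 2 ≤ v) (ht : 1 ≤ t)
    (hg : IsPrimitiveRoot (v : ZMod p) (p - 1)) (hp3 : 3 ≤ p) :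
    ((Finset.range (p - 1)).filter (fun i =>
      ∀ ι : Fin t, (v ^ ((i + (ι : ℕ)) % (p - 1)) % p) % v = 0)).card = (p - 1) / v ^ t := by
  haveI : Fact p.Prime := ⟨hp⟩
  set ζ : ZMod p := (v : ZMod p) with hζ
  have hζ0 : ζ ≠ 0 := by
    intro h
    have h1 := hg.pow_eq_one
    rw [h, zero_pow (by omega)] at h1
    exact zero_ne_one h1
  have hord : orderOf ζ = p - 1 := hg.eq_orderOf.symm
  have hval : ∀ m : ℕ, (ζ ^ m).val = v ^ m % p := by
    intro m
    rw [hζ, ← Nat.cast_pow, ZMod.val_natCast]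
  have hpv : ¬ (p ∣ v) := fun h => hζ0 ((ZMod.natCast_eq_zero_iff v p).2 h)
  have hcop : Nat.Coprime v p := ((Nat.Prime.coprime_iff_not_dvd hp).2 hpv).symm
  have hvt1 : v ^ t = v ^ (t - 1) * v := by
    conv_lhs => rw [show t = (t - 1) + 1 by omega]
    rw [pow_succ]
  -- value formula
  have hmulval : ∀ (j : ℕ) (x : ZMod p), (ζ ^ j * x).val = (v ^ j * x.val) % p := by
    intro j x
    have : ζ ^ j * x = ((v ^ j * x.val : ℕ) : ZMod p) := by
      push_cast
      rw [ZMod.natCast_rightInverse x]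
    rw [this, ZMod.val_natCast]
  -- the key equivalence
  have hQ : ∀ x : ZMod p,
      (∀ j : Fin t, v ∣ (ζ ^ (j : ℕ) * x).val) ↔ (v ∣ x.val ∧ v ^ (t - 1) * x.val < p) := by
    intro x
    constructor
    · intro H
      have Hm : ∀ j, j < t → v ∣ (v ^ j * x.val) % p := by
        intro j hj
        have := H ⟨j, hj⟩
        rwa [hmulval] at this
      have hxlt := ZMod.val_lt x
      have C : ∀ j, j < t → v ^ j * x.val < p := by
        intro j
        induction j with
        | zero => intro _; simpa using hxlt
        | succ k ih =>
          intro hk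
          have hky : v ^ k * x.val < p := ih (by omega)
          have h1 : v ∣ (v * (v ^ k * x.val)) % p := by
            have := Hm (k + 1) hk
            rwa [show v ^ (k+1) * x.val = v * (v ^ k * x.val) by ring] at this
          have h2 : v ∣ v * (v ^ k * x.val) := Dvd.intro _ rfl
          have hdm := Nat.div_add_mod (v * (v ^ k * x.val)) p
          have h3 : v ∣ p * (v * (v ^ k * x.val) / p) := by
            have := Nat.dvd_sub h2 h1
            rwa [show v * (v ^ k * x.val) - v * (v ^ k * x.val) % p
                = p * (v * (v ^ k * x.val) / p) by omega] at this
          have h4 : v ∣ (v * (v ^ k * x.val) / p) := hcop.dvd_of_dvd_mul_left h3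
          have h5 : v * (v ^ k * x.val) / p < v := by
            apply Nat.div_lt_of_lt_mul
            calc v * (v ^ k * x.val) < v * p :=
                  Nat.mul_lt_mul_of_pos_left hky (by omega)
              _ = p * v := by ring
          have h6 : v * (v ^ k * x.val) / p = 0 := Nat.eq_zero_of_dvd_of_lt h4 h5
          have h8 : v * (v ^ k * x.val) < p := by
            rcases Nat.lt_or_ge (v * (v ^ k * x.val)) p with h | h
            · exact h
            · exfalso
              have := Nat.div_pos h (by omega)
              omega
          calc v ^ (k + 1) * x.val = v * (v ^ k * x.val) := by ring
            _ < p := h8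
      constructor
      · have h0 := Hm 0 (by omega)
        simpa [Nat.mod_eq_of_lt hxlt] using h0
      · exact C (t - 1) (by omega)
    · rintro ⟨hdvd, hlt⟩ j
      have hj : (j : ℕ) ≤ t - 1 := by omega
      have hle : v ^ (j : ℕ) * x.val ≤ v ^ (t - 1) * x.val :=
        Nat.mul_le_mul_right _ (Nat.pow_le_pow_right (by omega) hj)
      rw [hmulval, Nat.mod_eq_of_lt (lt_of_le_of_lt hle hlt)]
      exact Dvd.dvd.mul_left hdvd _
  -- rewrite the filter predicate
  have hpred : ∀ i : ℕ, (∀ ι : Fin t, (v ^ ((i + (ι : ℕ)) % (p - 1)) % p) % v = 0)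
      ↔ (∀ j : Fin t, v ∣ (ζ ^ (j : ℕ) * ζ ^ i).val) := by
    intro i
    apply forall_congr'
    intro j
    have e1 : v ^ ((i + (j : ℕ)) % (p - 1)) % p = (ζ ^ (j : ℕ) * ζ ^ i).val := by
      rw [← hval]
      congr 1
      rw [← hord, pow_mod_orderOf, pow_add]
      ring
    rw [e1]
    exact Nat.dvd_iff_mod_eq_zero.symm
  rw [Finset.filter_congr (fun i _ => hpred i)]
  set K := (p - 1) / v ^ t with hK
  set T : Finset (ZMod p) := univ.filter (fun x => x ≠ 0 ∧ ∀ j : Fin t, v ∣ (ζ ^ (j : ℕ) * x).val) with hT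
  have hinj : ∀ a ∈ range (p - 1), ∀ b ∈ range (p - 1), ζ ^ a = ζ ^ b → a = b := by
    have key : ∀ a b : ℕ, a ≤ b → b < p - 1 → ζ ^ a = ζ ^ b → a = b := by
      intro a b hab hb he
      have h1 : ζ ^ a * 1 = ζ ^ a * ζ ^ (b - a) := by
        rw [mul_one, ← pow_add, show a + (b - a) = b by omega, he]
      have h2 : (1 : ZMod p) = ζ ^ (b - a) := mul_left_cancel₀ (pow_ne_zero _ hζ0) h1
      have h3 : (p - 1) ∣ (b - a) := hg.dvd_of_pow_eq_one _ h2.symm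
      have h4 := Nat.eq_zero_of_dvd_of_lt h3 (by omega)
      omega
    intro a ha b hb he
    simp only [mem_range] at ha hb
    rcases le_total a b with h | h
    · exact key a b h hb he
    · exact (key b a h ha he.symm).symm
  have hcard1 : ((range (p - 1)).filter (fun i => ∀ j : Fin t, v ∣ (ζ ^ (j : ℕ) * ζ ^ i).val)).card = T.card := by
    apply Finset.card_bij (fun i _ => ζ ^ i)
    · intro a ha
      simp only [mem_filter, mem_range] at ha
      simp only [hT, mem_filter, mem_univ, true_and]
      exact ⟨pow_ne_zero _ hζ0, ha.2⟩
    · intro a ha b hb he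
      simp only [mem_filter] at ha hb
      exact hinj a ha.1 b hb.1 he
    · intro x hx
      simp only [hT, mem_filter, mem_univ, true_and] at hx
      have himg : (range (p - 1)).image (fun i => ζ ^ i) = univ.filter (fun y : ZMod p => y ≠ 0) := by
        apply Finset.eq_of_subset_of_card_le
        · intro y hy
          simp only [mem_image, mem_range] at hy
          obtain ⟨i, _, rfl⟩ := hy
          simp [pow_ne_zero _ hζ0]
        · rw [Finset.card_image_of_injOn (fun a ha b hb => hinj a ha b hb), Finset.card_range,
            Finset.filter_ne', Finset.card_erase_of_mem (mem_univ 0), Finset.card_univ, ZMod.card]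
      have hxi : x ∈ (range (p - 1)).image (fun i => ζ ^ i) := by
        rw [himg]; simp [hx.1]
      obtain ⟨i, hi, he⟩ := Finset.mem_image.1 hxi
      refine ⟨i, ?_, he⟩
      simp only [mem_filter]
      exact ⟨hi, fun j => by rw [he]; exact hx.2 j⟩
  rw [hcard1]
  have hvK : ∀ m : ℕ, 1 ≤ m → m ≤ K → v * m < p := by
    intro m hm1 hm2
    have hvtm : v ^ t * m ≤ p - 1 := by
      have h1 := (Nat.le_div_iff_mul_le (show 0 < v ^ t by positivity)).1 hm2
      calc v ^ t * m = m * v ^ t := mul_comm _ _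
        _ ≤ p - 1 := h1
    have h1 : v * m ≤ v ^ t * m := Nat.mul_le_mul_right _ (by
      calc v = v ^ 1 := (pow_one v).symm
        _ ≤ v ^ t := Nat.pow_le_pow_right (by omega) ht)
    omega
  have hTcard : T = (Finset.Icc 1 K).image (fun k : ℕ => ((v * k : ℕ) : ZMod p)) := by
    ext x
    simp only [hT, mem_filter, mem_univ, true_and, mem_image, mem_Icc]
    rw [hQ x]
    constructor
    · rintro ⟨hx0, hdvd, hlt⟩
      obtain ⟨m, hm⟩ := hdvd
      have hm1 : 1 ≤ m := by
        rcases Nat.eq_zero_or_pos m with rfl | h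
        · exfalso
          apply hx0
          rw [← (ZMod.val_eq_zero x)]
          omega
        · exact h
      have hm2 : m ≤ K := by
        have h1 : v ^ (t - 1) * (v * m) < p := by rw [← hm]; exact hlt
        have h2 : v ^ t * m < p := by
          calc v ^ t * m = v ^ (t - 1) * (v * m) := by rw [hvt1]; ring
            _ < p := h1
        rw [hK]
        exact (Nat.le_div_iff_mul_le (show 0 < v ^ t by positivity)).2 (by
          calc m * v ^ t = v ^ t * m := mul_comm _ _
            _ ≤ p - 1 := by omega)
      refine ⟨m, ⟨hm1, hm2⟩, ?_⟩
      rw [← hm]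
      exact ZMod.natCast_rightInverse x
    · rintro ⟨m, ⟨hm1, hm2⟩, rfl⟩
      have hvm : v * m < p := hvK m hm1 hm2
      have hval' : ((v * m : ℕ) : ZMod p).val = v * m := ZMod.val_cast_of_lt hvm
      refine ⟨?_, ⟨m, hval'⟩, ?_⟩
      · intro h0
        rw [← ZMod.val_eq_zero, hval'] at h0
        have := Nat.mul_pos (show 0 < v by omega) hm1
        omega
      · rw [hval']
        have hvtm : v ^ t * m ≤ p - 1 := by
          have h1 := (Nat.le_div_iff_mul_le (show 0 < v ^ t by positivity)).1 hm2
          calc v ^ t * m = m * v ^ t := mul_comm _ _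
            _ ≤ p - 1 := h1
        calc v ^ (t - 1) * (v * m) = v ^ t * m := by rw [hvt1]; ring
          _ ≤ p - 1 := hvtm
          _ < p := by omega
  have hinj2 : Set.InjOn (fun k : ℕ => ((v * k : ℕ) : ZMod p)) ↑(Finset.Icc 1 K) := by
    intro a ha b hb he
    simp only [Finset.coe_Icc, Set.mem_Icc] at ha hb
    change ((v * a : ℕ) : ZMod p) = ((v * b : ℕ) : ZMod p) at he
    have h1 : ((v * a : ℕ) : ZMod p).val = v * a := ZMod.val_cast_of_lt (hvK a ha.1 ha.2)
    have h2 : ((v * b : ℕ) : ZMod p).val = v * b := ZMod.val_cast_of_lt (hvK b hb.1 hb.2)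
    have h3 : v * a = v * b := by rw [← h1, ← h2, he]
    have := Nat.eq_of_mul_eq_mul_left (show 0 < v by omega) h3
    omega
  rw [hTcard, Finset.card_image_of_injOn hinj2, Nat.card_Icc]

  exact Nat.add_sub_cancel _ _

/-- For `g = v` a primitive root mod `p`, writing `p = q·v^(t-1)+r` with `0 ≤ r < v^(t-1)`,
if `n_l + n_u = v^t` and `n_l·⌊q/v⌋ + n_u·(⌊q/v⌋+1) = p − 1`, then `n_l > 0`
(in particular some tuple `z` has `λ(z) = ⌊q/v⌋`), and `n_u = 0 ↔ p ≡ 1 (mod v^t)`. -/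
theorem stmt_17 (p v t q r : ℕ) (hp : p.Prime) (hodd : Odd p) (hvt : 2 ≤ v ^ t)
    (hg : IsPrimitiveRoot (v : ZMod p) (p - 1))
    (hpqr : p = q * v ^ (t - 1) + r) (hr : r < v ^ (t - 1)) :
    ∀ nl nu : ℕ, nl + nu = v ^ t → nl * (q / v) + nu * (q / v + 1) = p - 1 →
      (0 < nl ∧
        (∃ z : Fin t → Fin v,
          ((Finset.range (p - 1)).filter (fun i =>
            ∀ ι : Fin t, (v ^ ((i + (ι : ℕ)) % (p - 1)) % p) % v = (z ι : ℕ))).card = q / v) ∧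
        (nu = 0 ↔ p % v ^ t = 1)) := by
  intro nl nu hsum heq
  have hv2 : 2 ≤ v := by
    by_contra h
    push_neg at h
    have : v ^ t ≤ 1 := by
      calc v ^ t ≤ 1 ^ t := Nat.pow_le_pow_left (by omega) t
        _ = 1 := one_pow t
    omega
  have ht : 1 ≤ t := by
    by_contra h
    push_neg at h
    interval_cases t
    simp at hvt
  have hp2 := hp.two_le
  have hp3 : 3 ≤ p := by
    rcases Nat.lt_or_ge p 3 with h | h
    · interval_cases p
      simp [Nat.odd_iff] at hodd
    · exact h
  haveI : Fact p.Prime := ⟨hp⟩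
  have hζ0 : (v : ZMod p) ≠ 0 := by
    intro h
    have h1 := hg.pow_eq_one
    rw [h, zero_pow (by omega)] at h1
    exact zero_ne_one h1
  have hpv : ¬ p ∣ v := fun h => hζ0 ((ZMod.natCast_eq_zero_iff v p).2 h)
  have hvp : ¬ v ∣ p := by
    intro h
    rcases hp.eq_one_or_self_of_dvd v h with h1 | h1
    · omega
    · exact hpv (h1 ▸ dvd_refl v)
  have hvt1 : v ^ t = v ^ (t - 1) * v := by
    conv_lhs => rw [show t = (t - 1) + 1 by omega]
    rw [pow_succ]
  have key : (p - 1) / v ^ t = q / v := by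
    rcases Nat.eq_or_lt_of_le ht with h1 | h1
    · have ht1 : t = 1 := h1.symm
      subst ht1
      simp only [Nat.sub_self, pow_zero] at hpqr hr
      have hq : q = p := by omega
      subst hq
      rw [pow_one]
      have h3 := Nat.succ_div (a := q - 1) (b := v)
      rw [show q - 1 + 1 = q by omega, if_neg hvp] at h3
      rw [add_zero] at h3
      exact h3.symm
    · have hVd : ¬ v ^ (t - 1) ∣ p := by
        intro hdvd
        rcases hp.eq_one_or_self_of_dvd _ hdvd with h2 | h2
        · have : v ≤ v ^ (t - 1) := by
            calc v = v ^ 1 := (pow_one v).symm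
              _ ≤ v ^ (t - 1) := Nat.pow_le_pow_right (by omega) (by omega)
          omega
        · exact hpv (hp.dvd_of_dvd_pow (h2 ▸ dvd_refl p : p ∣ v ^ (t - 1)))
      have hr0 : r ≠ 0 := by
        rintro rfl
        exact hVd ⟨q, by rw [hpqr]; ring⟩
      have h2 : (p - 1) / v ^ (t - 1) = q := by
        have hc : q * v ^ (t - 1) = v ^ (t - 1) * q := mul_comm _ _
        have h3 : p - 1 = v ^ (t - 1) * q + (r - 1) := by omega
        rw [h3, Nat.mul_add_div (by positivity), Nat.div_eq_of_lt (by omega)]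
        rfl
      rw [hvt1, ← Nat.div_div_eq_div_mul, h2]
  obtain ⟨f, hf⟩ : ∃ f, q / v = f := ⟨_, rfl⟩
  have e3 : v ^ t * f + nu = p - 1 := by
    rw [hf] at heq
    have h1 : v ^ t * f = nl * f + nu * f := by rw [← hsum]; ring
    have h2 : nl * f + (nu * f + nu) = p - 1 := by rw [← heq]; ring
    omega
  have ebound : p ≤ v ^ t * f + v ^ t - 1 := by
    have hq := Nat.div_add_mod q v
    rw [hf] at hq
    obtain ⟨a, ha⟩ : ∃ a, q % v = a := ⟨_, rfl⟩
    rw [ha] at hq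
    have hav : a < v := by rw [← ha]; exact Nat.mod_lt _ (by omega)
    have e : p = v ^ t * f + a * v ^ (t - 1) + r := by
      rw [hpqr, ← hq, hvt1]; ring
    have h1 : a * v ^ (t - 1) ≤ (v - 1) * v ^ (t - 1) := Nat.mul_le_mul_right _ (by omega)
    have h2 : (v - 1) * v ^ (t - 1) = v * v ^ (t - 1) - v ^ (t - 1) := by
      rw [Nat.sub_one_mul]
    have h3 : v * v ^ (t - 1) = v ^ t := by rw [hvt1]; ring
    have h4 : 1 ≤ v ^ (t - 1) := Nat.one_le_pow _ _ (by omega)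
    have h5 : v ^ (t - 1) ≤ v * v ^ (t - 1) := Nat.le_mul_of_pos_left _ (by omega)
    omega
  refine ⟨by omega, ?_, ?_⟩
  · refine ⟨fun _ => (⟨0, by omega⟩ : Fin v), ?_⟩
    have hc := count_aux p v t hp hv2 ht hg hp3
    rw [key, hf] at hc
    rw [hf, ← hc]
  · constructor
    · intro h0
      have hP : p = v ^ t * f + 1 := by omega
      rw [hP, Nat.mul_add_mod]
      exact Nat.mod_eq_of_lt (by omega)
    · intro h0
      have hd := Nat.div_add_mod p (v ^ t)
      obtain ⟨m, hm⟩ : ∃ m, p / v ^ t = m := ⟨_, rfl⟩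
      rw [hm, h0] at hd
      have h5 : (p - 1) / v ^ t = m := by
        rw [show p - 1 = v ^ t * m by omega, Nat.mul_div_cancel_left _ (show 0 < v ^ t by positivity)]
      rw [key, hf] at h5
      have h6 : v ^ t * f = v ^ t * m := by rw [h5]
      omega
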